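/- Let R be a (possibly noncommutative) ring and let ℓ, Λ ∈ R be such that e := ℓ·Λ satisfies: e^2 − e is nilpotent. Then there exists Λ' ∈ R such that ℓ·Λ' is idempotent and ℓ·Λ' − e is nilpotent. -/

import Mathlib

private lemma aux_idem {S : Type*} [Ring S] :
    ∀ n : ℕ, ∀ x : S, (x ^ 2 - x) ^ n = 0 →
      ∃ z : S, (∀ w : S, Commute w x → Commute w z) ∧
        (x * z) * (x * z) = x * z ∧ IsNilpotent (x * z - x) := by
  intro n
  induction n using Nat.strong_induction_on with
  | _ n ih =>
    intro x hx
    match n, hx with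
    | 0, hx =>
      have h0 : (1 : S) = 0 := by simpa using hx
      haveI : Subsingleton S := subsingleton_of_zero_eq_one h0.symm
      exact ⟨0, fun w _ => Commute.zero_right w, Subsingleton.elim _ _,
        0, Subsingleton.elim _ _⟩
    | 1, hx =>
      have hx' : x ^ 2 = x := by rw [pow_one] at hx; linear_combination (norm := noncomm_ring) hx
      refine ⟨1, fun w _ => Commute.one_right w, ?_, 1, by simp⟩
      rw [mul_one]; linear_combination (norm := noncomm_ring) hx'
    | (m + 2), hx =>
      set y : S := 3 * x ^ 2 - 2 * x ^ 3 with hy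
      -- everything commuting with x commutes with y
      have hcy : ∀ w : S, Commute w x → Commute w y := fun w hw => by
        rw [hy]
        exact (((Commute.ofNat_right w 3).mul_right (hw.pow_right 2)).sub_right
          ((Commute.ofNat_right w 2).mul_right (hw.pow_right 3)))
      have key : y ^ 2 - y = (x ^ 2 - x) ^ 2 * (4 * x ^ 2 - 4 * x - 3) := by
        rw [hy]; noncomm_ring
      set k := (m + 2 + 1) / 2 with hk
      have hklt : k < m + 2 := by omega
      have hkle : m + 2 ≤ 2 * k := by omega
      have hcc : Commute ((x ^ 2 - x) ^ 2) (4 * x ^ 2 - 4 * x - 3) := by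
        have h1 : Commute (x ^ 2 - x) (4 * x ^ 2 - 4 * x - 3) := by
          have hx2 : Commute (x ^ 2 - x) x := ((Commute.refl x).pow_left 2).sub_left (Commute.refl x)
          exact (((Commute.ofNat_right _ 4).mul_right (hx2.pow_right 2)).sub_right
            ((Commute.ofNat_right _ 4).mul_right hx2)).sub_right (Commute.ofNat_right _ 3)
        exact h1.pow_left 2
      have hyk : (y ^ 2 - y) ^ k = 0 := by
        rw [key, hcc.mul_pow, ← pow_mul, show 2 * k = (m + 2) + (2 * k - (m + 2)) by omega,
          pow_add, hx, zero_mul, zero_mul]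
      obtain ⟨z', hcz', hz1, hz2⟩ := ih k hklt y hyk
      -- z' commutes with anything that commutes with x
      have hcz'' : ∀ w : S, Commute w x → Commute w z' := fun w hw => hcz' w (by
        rw [hy]
        exact (((Commute.ofNat_right w 3).mul_right (hw.pow_right 2)).sub_right
          ((Commute.ofNat_right w 2).mul_right (hw.pow_right 3))).symm.symm)
      set c : S := 3 * x - 2 * x ^ 2 with hc
      have hcxc : Commute x c := by
        rw [hc]
        exact ((Commute.ofNat_right x 3).mul_right (Commute.refl x)).sub_right
          ((Commute.ofNat_right x 2).mul_right ((Commute.refl x).pow_right 2))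
      have hxz'c : Commute x z' := hcz'' x (Commute.refl x)
      have hcwc : ∀ w : S, Commute w x → Commute w (c * z') := fun w hw => by
        refine Commute.mul_right ?_ (hcz'' w hw)
        rw [hc]
        exact ((Commute.ofNat_right w 3).mul_right hw).sub_right
          ((Commute.ofNat_right w 2).mul_right (hw.pow_right 2))
      refine ⟨c * z', hcwc, ?_, ?_⟩
      · have hxc : x * (c * z') = y * z' := by
          rw [hc, hy, ← mul_assoc]; congr 1; noncomm_ring
        rw [hxc]; exact hz1
      · have hxc : x * (c * z') = y * z' := by
          rw [hc, hy, ← mul_assoc]; congr 1; noncomm_ring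
        have hsplit : x * (c * z') - x = (y * z' - y) + (y - x) := by
          rw [hxc]; noncomm_ring
        rw [hsplit]
        have hyx : Commute (y - x) x :=
          ((hcy x (Commute.refl x)).symm.sub_left (Commute.refl x))
        have hn1 : IsNilpotent (y - x) := by
          have hnil : IsNilpotent (x ^ 2 - x) := ⟨m + 2, hx⟩
          have heq : y - x = (x ^ 2 - x) * (-(2 * x - 1)) := by rw [hy]; noncomm_ring
          rw [heq]
          refine Commute.isNilpotent_mul_right ?_ hnil
          have hq : Commute (x ^ 2 - x) x :=
            ((Commute.refl x).pow_left 2).sub_left (Commute.refl x)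
          exact (((Commute.ofNat_right _ 2).mul_right hq).sub_right
            (Commute.one_right _)).neg_right
        have hcomm : Commute (y * z' - y) (y - x) := by
          have h1 : Commute (y - x) y :=
            (Commute.refl y).sub_left (hcy x (Commute.refl x))
          have h2 : Commute (y - x) z' := hcz' _ h1
          exact ((h1.mul_right h2).sub_right h1).symm
        exact hcomm.isNilpotent_add hz2 hn1

/-- If `e := ℓ * Λ` has nilpotent `e^2 - e`, then there is `Λ'` such that `ℓ * Λ'` is
idempotent and `ℓ * Λ' - e` is nilpotent. -/
theorem stmt_4 {R : Type*} [Ring R] (ℓ Λ : R)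
    (h : IsNilpotent ((ℓ * Λ) ^ 2 - ℓ * Λ)) :
    ∃ Λ' : R, (ℓ * Λ') * (ℓ * Λ') = ℓ * Λ' ∧ IsNilpotent (ℓ * Λ' - ℓ * Λ) := by
  obtain ⟨n, hn⟩ := h
  obtain ⟨z, _, hz1, hz2⟩ := aux_idem n (ℓ * Λ) hn
  refine ⟨Λ * z, ?_, ?_⟩
  · rw [← mul_assoc ℓ Λ z]; exact hz1
  · rw [← mul_assoc ℓ Λ z]; exact hz2
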